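/- Let α < β be real numbers, let η ≥ 0 be an integer, and let c_0, …, c_η be real numbers satisfying c_ℓ ≤ c_{ℓ+1} for all 0 ≤ ℓ < η. Then the polynomial φ(x) = Σ_{ℓ=0}^{η} c_ℓ · b_ℓ^{η,[α,β]}(x) is monotone nondecreasing on the interval [α, β]. -/

import Mathlib

/-- One-dimensional Bernstein basis function of degree `η`, index `ℓ`, on `[α, β]`. -/
noncomputable def bern (η ℓ : ℕ) (α β x : ℝ) : ℝ :=
  (η.choose ℓ : ℝ) / (β - α) ^ η * (β - x) ^ (η - ℓ) * (x - α) ^ ℓ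

lemma bern_nonneg (η ℓ : ℕ) (α β x : ℝ) (hαβ : α < β) (hx : x ∈ Set.Icc α β) :
    0 ≤ bern η ℓ α β x := by
  obtain ⟨h1, h2⟩ := hx
  have hp : (0:ℝ) < (β - α) ^ η := pow_pos (by linarith) η
  unfold bern
  apply mul_nonneg
  apply mul_nonneg
  · exact div_nonneg (Nat.cast_nonneg _) hp.le
  · have : (0:ℝ) ≤ β - x := by linarith
    positivity
  · have : (0:ℝ) ≤ x - α := by linarith
    positivity

lemma bern_raw_deriv (α β : ℝ) (m ℓ : ℕ) (x : ℝ) :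
    HasDerivAt (fun y => bern (m+1) ℓ α β y)
      (((m+1).choose ℓ : ℝ) / (β - α) ^ (m+1) *
        ((-(((m+1)-ℓ : ℕ) : ℝ)) * (β - x) ^ (m - ℓ) * (x - α) ^ ℓ
          + (β - x) ^ ((m+1) - ℓ) * ((ℓ : ℝ) * (x - α) ^ (ℓ - 1)))) x := by
  have h1 : HasDerivAt (fun y : ℝ => (β - y) ^ ((m+1) - ℓ))
      ((((m+1)-ℓ : ℕ) : ℝ) * (β - x) ^ (m - ℓ) * (-1)) x := by
    have h := ((hasDerivAt_id x).const_sub β).pow ((m+1) - ℓ)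
    have he : (m + 1 - ℓ) - 1 = m - ℓ := by omega
    rw [he] at h
    exact h
  have h2 : HasDerivAt (fun y : ℝ => (y - α) ^ ℓ)
      ((ℓ : ℝ) * (x - α) ^ (ℓ - 1) * 1) x := ((hasDerivAt_id x).sub_const α).pow ℓ
  have h := ((h1.mul h2).const_mul (((m+1).choose ℓ : ℝ) / (β - α) ^ (m+1)))
  convert h using 1
  · rfl
  · rfl
  · funext y; simp [bern, mul_assoc]
  · ring

lemma bern_deriv (α β : ℝ) (hd : β - α ≠ 0) (m ℓ : ℕ) (x : ℝ) :
    HasDerivAt (fun y => bern (m+1) ℓ α β y)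
      ((m+1 : ℝ)/(β-α) * ((if ℓ = 0 then (0:ℝ) else bern m (ℓ-1) α β x) - bern m ℓ α β x)) x := by
  convert bern_raw_deriv α β m ℓ x using 1
  cases ℓ with
  | zero =>
      simp only [if_pos rfl, ↓reduceIte, bern]
      have hc : ((m+1).choose 0 : ℝ) = 1 := by norm_num
      have hcm : (m.choose 0 : ℝ) = 1 := by norm_num
      rw [hc, hcm]
      simp only [Nat.sub_zero, Nat.cast_add, Nat.cast_one, pow_zero]
      rw [pow_succ (β - α) m]
      field_simp
      ring
  | succ k =>
      have h2 : (m+1).choose (k+1) * (m - k) = (m+1) * m.choose (k+1) := by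
        have h := Nat.choose_mul_succ_eq m (k+1)
        have he : m + 1 - (k+1) = m - k := by omega
        rw [← he, ← h]; exact mul_comm _ _
      have key1 : ((m - k : ℕ) : ℝ) * ((m+1).choose (k+1) : ℝ)
          = (m+1 : ℝ) * (m.choose (k+1) : ℝ) := by
        have := congrArg (Nat.cast (R := ℝ)) h2
        push_cast at this; linarith
      have h3 : (k+1) * ((m+1).choose (k+1)) = (m+1) * m.choose k := by
        have h := Nat.add_one_mul_choose_eq m k
        simpa [Nat.succ_eq_add_one, mul_comm] using h.symm
      have key2 : ((k:ℝ)+1) * ((m+1).choose (k+1) : ℝ)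
          = (m+1 : ℝ) * (m.choose k : ℝ) := by
        have := congrArg (Nat.cast (R := ℝ)) h3
        push_cast at this; linarith
      have he1 : m + 1 - (k+1) = m - k := by omega
      have he2 : k + 1 - 1 = k := by omega
      simp only [Nat.succ_ne_zero, if_neg, bern, Nat.add_sub_cancel, he1, he2]
      push_cast
      simp only [div_eq_mul_inv, ← inv_pow]
      linear_combination
        (-(((β-x)^(m-k)*(x-α)^k)) * (β-α)⁻¹ * ((β-α)⁻¹)^m) * key2
        + (((β-x)^(m-(k+1))*(x-α)^(k+1)) * (β-α)⁻¹ * ((β-α)⁻¹)^m) * key1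

lemma sum_bern_deriv (α β : ℝ) (hd : β - α ≠ 0) (m : ℕ) (c : ℕ → ℝ) (x : ℝ) :
    HasDerivAt (fun y => ∑ ℓ ∈ Finset.range (m + 1 + 1), c ℓ * bern (m+1) ℓ α β y)
      ((m+1 : ℝ)/(β-α) * ∑ ℓ ∈ Finset.range (m + 1), (c (ℓ+1) - c ℓ) * bern m ℓ α β x) x := by
  have h := HasDerivAt.sum (u := Finset.range (m + 1 + 1))
    (fun ℓ _ => (bern_deriv α β hd m ℓ x).const_mul (c ℓ))
  convert h using 1
  · rfl
  · rfl
  · funext y; simp [Finset.sum_apply]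
  have hz : bern m (m+1) α β x = 0 := by
    simp [bern, Nat.choose_eq_zero_of_lt (Nat.lt_succ_self m)]
  have e1 : ∑ ℓ ∈ Finset.range (m + 1 + 1),
      c ℓ * ((m+1 : ℝ)/(β-α) * ((if ℓ = 0 then (0:ℝ) else bern m (ℓ-1) α β x) - bern m ℓ α β x))
      = (m+1 : ℝ)/(β-α) *
        ((∑ ℓ ∈ Finset.range (m + 1 + 1), c ℓ * (if ℓ = 0 then (0:ℝ) else bern m (ℓ-1) α β x))
          - ∑ ℓ ∈ Finset.range (m + 1 + 1), c ℓ * bern m ℓ α β x) := by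
    rw [← Finset.sum_sub_distrib, Finset.mul_sum]
    exact Finset.sum_congr rfl (fun ℓ _ => by ring)
  rw [e1]
  congr 1
  rw [Finset.sum_range_succ' (fun ℓ => c ℓ * (if ℓ = 0 then (0:ℝ) else bern m (ℓ-1) α β x)),
    Finset.sum_range_succ (fun ℓ => c ℓ * bern m ℓ α β x), hz]
  norm_num
  rw [← Finset.sum_sub_distrib]
  exact (Finset.sum_congr rfl (fun ℓ _ => by ring)).symm

/-- A coefficient monotone increasing Bernstein polynomial is monotone nondecreasing
on its reference interval. -/
theorem bernstein_coeff_monotone (α β : ℝ) (hαβ : α < β) (η : ℕ) (c : ℕ → ℝ)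
    (hc : ∀ ℓ < η, c ℓ ≤ c (ℓ + 1)) :
    MonotoneOn (fun x => ∑ ℓ ∈ Finset.range (η + 1), c ℓ * bern η ℓ α β x)
      (Set.Icc α β) := by
  cases η with
  | zero =>
      intro a _ b _ _
      simp [bern]
  | succ m =>
      have hd : β - α ≠ 0 := sub_ne_zero.2 (ne_of_gt hαβ)
      apply monotoneOn_of_deriv_nonneg (convex_Icc α β)
      · exact (Differentiable.continuous
          (fun x => (sum_bern_deriv α β hd m c x).differentiableAt)).continuousOn
      · intro x _
        exact (sum_bern_deriv α β hd m c x).differentiableAt.differentiableWithinAt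
      · intro x hx
        rw [interior_Icc] at hx
        rw [(sum_bern_deriv α β hd m c x).deriv]
        apply mul_nonneg
        · apply div_nonneg (by positivity); linarith
        · apply Finset.sum_nonneg
          intro ℓ hℓ
          apply mul_nonneg
          · have := hc ℓ (Finset.mem_range.mp hℓ); linarith
          · exact bern_nonneg m ℓ α β x hαβ (Set.mem_Icc.2 ⟨hx.1.le, hx.2.le⟩)
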